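/- Suppose a sequence W_t of nonnegative reals satisfies γ·c₁·‖ξ_t‖² ≤ W_t ≤ c₂·‖ξ_t‖² for all t, with constants γ, c₁, c₂ > 0, and W_{t+1} − W_t ≤ −γ̃‖ξ_t‖² + s for all t, with γ̃ > 0, γ̃ ≤ c₂, and a constant s ≥ 0. Then W_t ≤ (1 − γ̃/c₂)ᵗ · W_0 + (c₂/γ̃)·s for all t ≥ 0, and consequently ‖ξ_t‖² ≤ (c₂/(γ c₁))·(1 − γ̃/c₂)ᵗ·‖ξ_0‖² + (c₂ s)/(γ c₁ γ̃). -/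

import Mathlib

theorem iss_lyapunov_geometric_bound {n : ℕ}
    (W : ℕ → ℝ) (ξ : ℕ → EuclideanSpace ℝ (Fin n))
    (γ c₁ c₂ γt s : ℝ)
    (hγ : 0 < γ) (hc₁ : 0 < c₁) (hc₂ : 0 < c₂) (hγt : 0 < γt)
    (hγtc₂ : γt ≤ c₂) (hs : 0 ≤ s)
    (hWnonneg : ∀ t, 0 ≤ W t)
    (hlb : ∀ t, γ * c₁ * ‖ξ t‖ ^ 2 ≤ W t)
    (hub : ∀ t, W t ≤ c₂ * ‖ξ t‖ ^ 2)
    (hdec : ∀ t, W (t + 1) - W t ≤ -γt * ‖ξ t‖ ^ 2 + s) :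
    (∀ t, W t ≤ (1 - γt / c₂) ^ t * W 0 + (c₂ / γt) * s) ∧
    (∀ t, ‖ξ t‖ ^ 2 ≤ (c₂ / (γ * c₁)) * (1 - γt / c₂) ^ t * ‖ξ 0‖ ^ 2
        + (c₂ * s) / (γ * c₁ * γt)) := by
  have hq0 : 0 ≤ 1 - γt / c₂ := by
    have : γt / c₂ ≤ 1 := (div_le_one hc₂).2 hγtc₂
    linarith
  -- one step contraction
  have hstep : ∀ t, W (t + 1) ≤ (1 - γt / c₂) * W t + s := by
    intro t
    have h1 : (γt / c₂) * W t ≤ γt * ‖ξ t‖ ^ 2 := by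
      have := hub t
      have hγt' := hγt.le
      calc (γt / c₂) * W t ≤ (γt / c₂) * (c₂ * ‖ξ t‖ ^ 2) := by
            apply mul_le_mul_of_nonneg_left (hub t) (by positivity)
        _ = γt * ‖ξ t‖ ^ 2 := by field_simp
    have := hdec t
    nlinarith
  have hW : ∀ t, W t ≤ (1 - γt / c₂) ^ t * W 0 + (c₂ / γt) * s := by
    intro t
    induction t with
    | zero => simp [hs, le_div_iff₀ hγt]; positivity
    | succ t ih =>
      have h2 : (1 - γt / c₂) * W t ≤ (1 - γt / c₂) * ((1 - γt / c₂) ^ t * W 0 + (c₂ / γt) * s) :=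
        mul_le_mul_of_nonneg_left ih hq0
      have key : (1 - γt / c₂) * ((c₂ / γt) * s) + s ≤ (c₂ / γt) * s := by
        have : (1 - γt / c₂) * (c₂ / γt) + 1 = c₂ / γt := by
          field_simp
          ring
        nlinarith
      calc W (t + 1) ≤ (1 - γt / c₂) * W t + s := hstep t
        _ ≤ (1 - γt / c₂) * ((1 - γt / c₂) ^ t * W 0 + (c₂ / γt) * s) + s := by linarith
        _ = (1 - γt / c₂) ^ (t + 1) * W 0 + ((1 - γt / c₂) * ((c₂ / γt) * s) + s) := by ring
        _ ≤ (1 - γt / c₂) ^ (t + 1) * W 0 + (c₂ / γt) * s := by linarith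
  refine ⟨hW, fun t => ?_⟩
  have hWt := hW t
  have hl := hlb t
  have hu0 := hub 0
  have hpow : 0 ≤ (1 - γt / c₂) ^ t := pow_nonneg hq0 t
  have h3 : W t ≤ (1 - γt / c₂) ^ t * (c₂ * ‖ξ 0‖ ^ 2) + (c₂ / γt) * s := by
    have := mul_le_mul_of_nonneg_left hu0 hpow
    linarith
  have hgc : 0 < γ * c₁ := by positivity
  rw [div_mul_eq_mul_div, div_mul_eq_mul_div, div_add_div _ _ (ne_of_gt hgc) (by positivity),
    le_div_iff₀ (by positivity)]
  have h4 : γ * c₁ * ‖ξ t‖ ^ 2 ≤ (1 - γt / c₂) ^ t * (c₂ * ‖ξ 0‖ ^ 2) + (c₂ / γt) * s :=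
    le_trans hl h3
  have hc2s : (c₂ / γt) * s * (γ * c₁ * γt) = c₂ * s * (γ * c₁) := by
    field_simp
  nlinarith [mul_le_mul_of_nonneg_right h4 (mul_pos hgc hγt).le]
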